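/- arXiv:2409.04226 — 2 statements merged into one kernel-verified Lean document; each statement's English description precedes it below -/
import Mathlib

section
/- For any digraph D = (V, A) on n vertices with minimum in-degree δ⁻ and any integer k with 1 ≤ k ≤ δ⁻, the k-domination number satisfies γ_k(D) ≤ n · (1 - δ' / (C(δ⁻, k-1)^(1/δ') · (1 + δ')^(1 + 1/δ'))), where δ' = δ⁻ - k + 1 and C(δ⁻, k-1) is the binomial coefficient. -/
/-- In-neighbourhood of `v` in the digraph with arc relation `A`. -/
def inN {V : Type*} (A : V → V → Prop) (v : V) : Set V := {u | A u v}

/-- `X` is a `k`-dominating set of the digraph with arc relation `A`. -/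
def kDom {V : Type*} (A : V → V → Prop) (k : ℕ) (X : Set V) : Prop :=
  ∀ v, v ∉ X → k ≤ ((inN A v) ∩ X).ncard

/-- The `k`-domination number. -/
noncomputable def gammaK {V : Type*} [Fintype V] (A : V → V → Prop) (k : ℕ) : ℕ :=
  sInf {m | ∃ X : Set V, kDom A k X ∧ X.ncard = m}


section Aux
open Finset
variable {V : Type*} [Fintype V] [DecidableEq V]

set_option linter.unusedSectionVars false

lemma gk_sum_w (p q : ℝ) (hpq : p + q = 1) (E : Finset V) :
    ∑ S ∈ E.powerset, p ^ S.card * q ^ (E.card - S.card) = 1 := by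
  rw [Finset.sum_pow_mul_eq_add_pow, hpq, one_pow]

lemma gk_split (p q : ℝ) (hpq : p + q = 1) (T : Finset V) (f : Finset V → ℝ) :
    ∑ S : Finset V, p ^ S.card * q ^ (Fintype.card V - S.card) * f (S ∩ T)
    = ∑ U ∈ T.powerset, p ^ U.card * q ^ (T.card - U.card) * f U := by
  have key : ∑ S : Finset V, p ^ S.card * q ^ (Fintype.card V - S.card) * f (S ∩ T)
      = ∑ P ∈ T.powerset ×ˢ Tᶜ.powerset,
          (p ^ P.1.card * q ^ (T.card - P.1.card) * f P.1) *
          (p ^ P.2.card * q ^ (Tᶜ.card - P.2.card)) := by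
    refine Finset.sum_nbij' (fun S => (S ∩ T, S \ T)) (fun P => P.1 ∪ P.2) ?_ ?_ ?_ ?_ ?_
    · intro S _
      simp only [Finset.mem_product, Finset.mem_powerset]
      exact ⟨Finset.inter_subset_right, fun x hx => by
        simp only [Finset.mem_compl]
        exact fun hT => (Finset.mem_sdiff.1 hx).2 hT⟩
    · intro P _; exact Finset.mem_univ _
    · intro S _
      ext x
      simp only [Finset.mem_union, Finset.mem_inter, Finset.mem_sdiff]
      tauto
    · intro P hP
      simp only [Finset.mem_product, Finset.mem_powerset] at hP
      obtain ⟨h1, h2⟩ := hP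
      have hd : ∀ x ∈ P.2, x ∉ T := fun x hx => Finset.mem_compl.1 (h2 hx)
      ext1
      · ext x
        simp only [Finset.mem_inter, Finset.mem_union]
        constructor
        · rintro ⟨hx | hx, hT⟩
          · exact hx
          · exact absurd hT (hd x hx)
        · intro hx; exact ⟨Or.inl hx, h1 hx⟩
      · ext x
        simp only [Finset.mem_sdiff, Finset.mem_union]
        constructor
        · rintro ⟨hx | hx, hT⟩
          · exact absurd (h1 hx) hT
          · exact hx
        · intro hx; exact ⟨Or.inr hx, hd x hx⟩
    · intro S _
      have hST : S ∩ T ⊆ T := Finset.inter_subset_right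
      have hSC : S \ T ⊆ Tᶜ := fun x hx => Finset.mem_compl.2 (Finset.mem_sdiff.1 hx).2
      have hcard : S.card = (S ∩ T).card + (S \ T).card :=
        (Finset.card_inter_add_card_sdiff S T).symm
      have h1 : (S ∩ T).card ≤ T.card := Finset.card_le_card hST
      have h2 : (S \ T).card ≤ Tᶜ.card := Finset.card_le_card hSC
      have hTc : T.card + Tᶜ.card = Fintype.card V := by
        rw [Finset.card_compl]
        have := Finset.card_le_univ T
        omega
      have hsub : Fintype.card V - S.card
          = (T.card - (S ∩ T).card) + (Tᶜ.card - (S \ T).card) := by omega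
      simp only []
      rw [hcard, show Fintype.card V - (#(S ∩ T) + #(S \ T))
          = (#T - #(S ∩ T)) + (#Tᶜ - #(S \ T)) by omega, pow_add, pow_add]
      ring
  rw [key, Finset.sum_product]
  simp only []
  rw [← Finset.sum_mul_sum]
  rw [gk_sum_w p q hpq Tᶜ, mul_one]


lemma gk_size_term (p q : ℝ) (hpq : p + q = 1) (v : V) :
    ∑ S : Finset V, p ^ S.card * q ^ (Fintype.card V - S.card) *
      (if v ∈ S then (1:ℝ) else 0) = p := by
  have h : ∀ S : Finset V, (if v ∈ S then (1:ℝ) else 0)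
      = (fun U : Finset V => if v ∈ U then (1:ℝ) else 0) (S ∩ {v}) := by
    intro S; simp
  calc ∑ S : Finset V, p ^ S.card * q ^ (Fintype.card V - S.card) *
      (if v ∈ S then (1:ℝ) else 0)
      = ∑ S : Finset V, p ^ S.card * q ^ (Fintype.card V - S.card) *
        (fun U : Finset V => if v ∈ U then (1:ℝ) else 0) (S ∩ {v}) := by
        refine Finset.sum_congr rfl fun S _ => ?_; rw [← h]
    _ = ∑ U ∈ ({v} : Finset V).powerset, p ^ U.card * q ^ (({v} : Finset V).card - U.card) *
        (if v ∈ U then (1:ℝ) else 0) :=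
        gk_split p q hpq {v} (fun U : Finset V => if v ∈ U then (1:ℝ) else 0)
    _ = p := by
        have hps : ({v} : Finset V).powerset = {∅, {v}} := by
          ext U
          simp [Finset.mem_powerset, Finset.subset_singleton_iff]
        rw [hps, Finset.sum_pair (by intro h; exact absurd (h ▸ Finset.mem_singleton_self v) (Finset.notMem_empty v) : (∅ : Finset V) ≠ {v})]
        simp

lemma gk_bad_bound (p q : ℝ) (hp : 0 ≤ p) (hq : 0 ≤ q) (hpq : p + q = 1)
    (k : ℕ) (hk : 1 ≤ k) (v : V) (N : Finset V) (hvN : v ∉ N) (hkN : k ≤ N.card) :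
    ∑ S : Finset V, p ^ S.card * q ^ (Fintype.card V - S.card) *
      (if v ∉ S ∧ (S ∩ N).card < k then (1:ℝ) else 0)
    ≤ (N.card.choose (k-1) : ℝ) * q ^ (N.card - k + 2) := by
  set δ := N.card with hδ
  set f : Finset V → ℝ := fun U => if v ∉ U ∧ (U ∩ N).card < k then (1:ℝ) else 0 with hf
  have h1 : ∀ S : Finset V, (if v ∉ S ∧ (S ∩ N).card < k then (1:ℝ) else 0)
      = f (S ∩ insert v N) := by
    intro S
    have e1 : v ∈ S ∩ insert v N ↔ v ∈ S := by simp
    have e2 : (S ∩ insert v N) ∩ N = S ∩ N := by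
      ext x; simp only [mem_inter, mem_insert]; tauto
    simp only [hf, e2]
    by_cases hv : v ∈ S
    · rw [if_neg (by tauto), if_neg (by rw [e1]; tauto)]
    · by_cases hc : (S ∩ N).card < k
      · rw [if_pos ⟨hv, hc⟩, if_pos ⟨by rw [e1]; exact hv, hc⟩]
      · rw [if_neg (by tauto), if_neg (by tauto)]
  have step1 : ∑ S : Finset V, p ^ S.card * q ^ (Fintype.card V - S.card) *
      (if v ∉ S ∧ (S ∩ N).card < k then (1:ℝ) else 0)
      = ∑ U ∈ (insert v N).powerset, p ^ U.card * q ^ ((insert v N).card - U.card) * f U := by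
    rw [← gk_split p q hpq]
    refine Finset.sum_congr rfl fun S _ => ?_
    rw [← h1]
  rw [step1, Finset.sum_powerset_insert hvN]
  have hzero : ∀ U ∈ N.powerset,
      p ^ (insert v U).card * q ^ ((insert v N).card - (insert v U).card) * f (insert v U) = 0 := by
    intro U _
    have : f (insert v U) = 0 := by simp [hf]
    rw [this, mul_zero]
  rw [Finset.sum_congr rfl hzero, Finset.sum_const, smul_zero, add_zero]
  have hcard : (insert v N).card = δ + 1 := Finset.card_insert_of_notMem hvN
  have hfU : ∀ U ∈ N.powerset,
      p ^ U.card * q ^ ((insert v N).card - U.card) * f U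
      = p ^ U.card * q ^ (δ + 1 - U.card) * (if U.card < k then (1:ℝ) else 0) := by
    intro U hU
    rw [Finset.mem_powerset] at hU
    have hvU : v ∉ U := fun h => hvN (hU h)
    have hUN : U ∩ N = U := Finset.inter_eq_left.2 hU
    simp only [hf, hUN, hcard]
    by_cases hc : U.card < k
    · rw [if_pos ⟨hvU, hc⟩, if_pos hc]
    · rw [if_neg (by tauto), if_neg hc]
  rw [Finset.sum_congr rfl hfU]
  -- group by cardinality
  rw [Finset.sum_powerset]
  have hgroup : ∀ i ∈ Finset.range (δ + 1),
      ∑ U ∈ N.powersetCard i, p ^ U.card * q ^ (δ + 1 - U.card) * (if U.card < k then (1:ℝ) else 0)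
      = (δ.choose i : ℝ) * (p ^ i * q ^ (δ + 1 - i) * (if i < k then (1:ℝ) else 0)) := by
    intro i _
    have : ∀ U ∈ N.powersetCard i,
        p ^ U.card * q ^ (δ + 1 - U.card) * (if U.card < k then (1:ℝ) else 0)
        = p ^ i * q ^ (δ + 1 - i) * (if i < k then (1:ℝ) else 0) := by
      intro U hU
      rw [(Finset.mem_powersetCard.1 hU).2]
    rw [Finset.sum_congr rfl this, Finset.sum_const, Finset.card_powersetCard, nsmul_eq_mul]
  rw [Finset.sum_congr rfl hgroup]
  -- termwise bound
  have hterm : ∀ i ∈ Finset.range (δ + 1),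
      (δ.choose i : ℝ) * (p ^ i * q ^ (δ + 1 - i) * (if i < k then (1:ℝ) else 0))
      ≤ ((δ.choose (k-1) : ℝ) * q ^ (δ - k + 2)) * (((k-1).choose i : ℝ) * p ^ i * q ^ (k - 1 - i)) := by
    intro i hi
    rw [Finset.mem_range] at hi
    by_cases hc : i < k
    · rw [if_pos hc, mul_one]
      have hik : i ≤ k - 1 := by omega
      have hkδ' : k - 1 ≤ δ := by omega
      have hchoose : (δ.choose i : ℝ) ≤ (δ.choose (k-1) : ℝ) * ((k-1).choose i : ℝ) := by
        have := Nat.choose_mul (n := δ) hik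
        have hpos : 1 ≤ (δ - i).choose (k - 1 - i) :=
          Nat.choose_pos (by omega)
        have hnat : δ.choose i ≤ δ.choose (k-1) * (k-1).choose i := by
          calc δ.choose i ≤ δ.choose i * ((δ - i).choose (k - 1 - i)) :=
                Nat.le_mul_of_pos_right _ hpos
            _ = δ.choose (k-1) * (k-1).choose i := this.symm
        exact_mod_cast hnat
      have hqsplit : q ^ (δ + 1 - i) = q ^ (k - 1 - i) * q ^ (δ - k + 2) := by
        rw [← pow_add]
        congr 1
        omega
      calc (δ.choose i : ℝ) * (p ^ i * q ^ (δ + 1 - i))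
          ≤ ((δ.choose (k-1) : ℝ) * ((k-1).choose i : ℝ)) * (p ^ i * q ^ (δ + 1 - i)) := by
            apply mul_le_mul_of_nonneg_right hchoose
            positivity
        _ = ((δ.choose (k-1) : ℝ) * q ^ (δ - k + 2)) * (((k-1).choose i : ℝ) * p ^ i * q ^ (k - 1 - i)) := by
            rw [hqsplit]; ring
    · rw [if_neg hc, mul_zero, mul_zero]
      have : (k-1).choose i = 0 := Nat.choose_eq_zero_of_lt (by omega)
      rw [this]
      simp only [Nat.cast_zero]
      positivity
  calc ∑ i ∈ Finset.range (δ + 1),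
        (δ.choose i : ℝ) * (p ^ i * q ^ (δ + 1 - i) * (if i < k then (1:ℝ) else 0))
      ≤ ∑ i ∈ Finset.range (δ + 1),
        ((δ.choose (k-1) : ℝ) * q ^ (δ - k + 2)) * (((k-1).choose i : ℝ) * p ^ i * q ^ (k - 1 - i)) :=
        Finset.sum_le_sum hterm
    _ = ((δ.choose (k-1) : ℝ) * q ^ (δ - k + 2)) *
        ∑ i ∈ Finset.range (δ + 1), (((k-1).choose i : ℝ) * p ^ i * q ^ (k - 1 - i)) := by
        rw [Finset.mul_sum]
    _ = ((δ.choose (k-1) : ℝ) * q ^ (δ - k + 2)) *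
        ∑ i ∈ Finset.range k, (((k-1).choose i : ℝ) * p ^ i * q ^ (k - 1 - i)) := by
        congr 1
        rw [← Finset.sum_subset (Finset.range_subset_range.2 (by omega : k ≤ δ + 1))]
        intro i _ hik
        rw [Finset.mem_range, not_lt] at hik
        rw [Nat.choose_eq_zero_of_lt (by omega)]
        simp
    _ = ((δ.choose (k-1) : ℝ) * q ^ (δ - k + 2)) := by
        have hkk : k - 1 + 1 = k := by omega
        have h := add_pow p q (k-1)
        rw [hpq, one_pow, hkk] at h
        have hsum : ∑ i ∈ Finset.range k, (((k-1).choose i : ℝ) * p ^ i * q ^ (k - 1 - i)) = 1 := by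
          calc ∑ i ∈ Finset.range k, (((k-1).choose i : ℝ) * p ^ i * q ^ (k - 1 - i))
              = ∑ m ∈ Finset.range k, p ^ m * q ^ (k - 1 - m) * ((k-1).choose m : ℝ) := by
                refine Finset.sum_congr rfl fun i _ => by ring
            _ = 1 := h.symm
        rw [hsum, mul_one]


lemma gk_exists_small (A : V → V → Prop) (hirr : ∀ v, ¬ A v v)
    (k δ : ℕ) (hk : 1 ≤ k) (hkδ : k ≤ δ)
    (hmin : ∀ v : V, δ ≤ (inN A v).ncard)
    (p q : ℝ) (hp : 0 ≤ p) (hq : 0 ≤ q) (hpq : p + q = 1) :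
    ∃ X : Set V, kDom A k X ∧
      (X.ncard : ℝ) ≤ (Fintype.card V : ℝ) * p +
        (Fintype.card V : ℝ) * ((δ.choose (k-1) : ℝ) * q ^ (δ - k + 2)) := by
  classical
  -- truncated in-neighbourhoods
  have hNex : ∀ v : V, ∃ N : Finset V, N ⊆ (inN A v).toFinset ∧ N.card = δ := by
    intro v
    have h1 : δ ≤ (inN A v).toFinset.card := by
      rw [← Set.ncard_eq_toFinset_card']; exact hmin v
    obtain ⟨t, ht, htc⟩ := Finset.exists_subset_card_eq h1
    exact ⟨t, ht, htc⟩
  choose N' hN'sub hN'card using hNex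
  have hvN' : ∀ v, v ∉ N' v := by
    intro v hv
    have := hN'sub v hv
    rw [Set.mem_toFinset] at this
    exact hirr v this
  -- weights
  set n := Fintype.card V with hn
  set w : Finset V → ℝ := fun S => p ^ S.card * q ^ (n - S.card) with hw
  have hw0 : ∀ S, 0 ≤ w S := fun S => by
    simp only [hw]; positivity
  have hwsum : ∑ S : Finset V, w S = 1 := by
    have := gk_sum_w p q hpq (Finset.univ : Finset V)
    rwa [Finset.powerset_univ, Finset.card_univ] at this
  -- the bad set
  set B : Finset V → Finset V := fun S =>
    Finset.univ.filter (fun v => v ∉ S ∧ ((inN A v).toFinset ∩ S).card < k) with hB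
  set g : Finset V → ℝ := fun S => (S.card : ℝ) + ((B S).card : ℝ) with hg
  -- expectation bound
  have hexp : ∑ S : Finset V, w S * g S ≤
      (n : ℝ) * p + (n : ℝ) * ((δ.choose (k-1) : ℝ) * q ^ (δ - k + 2)) := by
    have hsplitg : ∑ S : Finset V, w S * g S
        = (∑ S : Finset V, w S * (S.card : ℝ)) + ∑ S : Finset V, w S * ((B S).card : ℝ) := by
      rw [← Finset.sum_add_distrib]
      refine Finset.sum_congr rfl fun S _ => by rw [hg]; ring
    have hsize : ∑ S : Finset V, w S * (S.card : ℝ) = (n : ℝ) * p := by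
      have hcard : ∀ S : Finset V, (S.card : ℝ) = ∑ v : V, (if v ∈ S then (1:ℝ) else 0) := by
        intro S
        rw [Finset.sum_ite_mem, Finset.univ_inter, Finset.sum_const, nsmul_eq_mul, mul_one]
      calc ∑ S : Finset V, w S * (S.card : ℝ)
          = ∑ S : Finset V, ∑ v : V, w S * (if v ∈ S then (1:ℝ) else 0) := by
            refine Finset.sum_congr rfl fun S _ => ?_
            rw [hcard, Finset.mul_sum]
        _ = ∑ v : V, ∑ S : Finset V, w S * (if v ∈ S then (1:ℝ) else 0) := Finset.sum_comm
        _ = ∑ v : V, p := by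
            refine Finset.sum_congr rfl fun v _ => ?_
            exact gk_size_term p q hpq v
        _ = (n : ℝ) * p := by
            rw [Finset.sum_const, Finset.card_univ, nsmul_eq_mul, hn]
    have hbad : ∑ S : Finset V, w S * ((B S).card : ℝ)
        ≤ (n : ℝ) * ((δ.choose (k-1) : ℝ) * q ^ (δ - k + 2)) := by
      have hcard : ∀ S : Finset V, ((B S).card : ℝ) = ∑ v : V, (if v ∈ B S then (1:ℝ) else 0) := by
        intro S
        rw [Finset.sum_ite_mem, Finset.univ_inter, Finset.sum_const, nsmul_eq_mul, mul_one]
      calc ∑ S : Finset V, w S * ((B S).card : ℝ)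
          = ∑ v : V, ∑ S : Finset V, w S * (if v ∈ B S then (1:ℝ) else 0) := by
            rw [← Finset.sum_comm]
            refine Finset.sum_congr rfl fun S _ => ?_
            rw [hcard, Finset.mul_sum]
        _ ≤ ∑ v : V, ∑ S : Finset V, w S *
              (if v ∉ S ∧ (S ∩ N' v).card < k then (1:ℝ) else 0) := by
            refine Finset.sum_le_sum fun v _ => Finset.sum_le_sum fun S _ => ?_
            refine mul_le_mul_of_nonneg_left ?_ (hw0 S)
            by_cases hvB : v ∈ B S
            · rw [if_pos hvB]
              simp only [hB, Finset.mem_filter] at hvB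
              obtain ⟨-, hvS, hcS⟩ := hvB
              have hle : (S ∩ N' v).card ≤ ((inN A v).toFinset ∩ S).card := by
                apply Finset.card_le_card
                intro x hx
                rw [Finset.mem_inter] at hx ⊢
                exact ⟨hN'sub v hx.2, hx.1⟩
              rw [if_pos ⟨hvS, by omega⟩]
            · rw [if_neg hvB]
              split <;> norm_num
        _ ≤ ∑ v : V, (δ.choose (k-1) : ℝ) * q ^ (δ - k + 2) := by
            refine Finset.sum_le_sum fun v _ => ?_
            have := gk_bad_bound p q hp hq hpq k hk v (N' v) (hvN' v)
              (by rw [hN'card]; exact hkδ)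
            rwa [hN'card] at this
        _ = (n : ℝ) * ((δ.choose (k-1) : ℝ) * q ^ (δ - k + 2)) := by
            rw [Finset.sum_const, Finset.card_univ, nsmul_eq_mul, hn]
    rw [hsplitg]
    exact add_le_add (le_of_eq hsize) hbad
  -- averaging: some S achieves at most the expectation
  obtain ⟨S₀, -, hS₀min⟩ := Finset.exists_min_image (Finset.univ : Finset (Finset V)) g
    ⟨∅, Finset.mem_univ _⟩
  have hS₀ : g S₀ ≤ (n : ℝ) * p + (n : ℝ) * ((δ.choose (k-1) : ℝ) * q ^ (δ - k + 2)) := by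
    have h1 : g S₀ = ∑ S : Finset V, w S * g S₀ := by
      rw [← Finset.sum_mul, hwsum, one_mul]
    have h2 : ∑ S : Finset V, w S * g S₀ ≤ ∑ S : Finset V, w S * g S :=
      Finset.sum_le_sum fun S _ =>
        mul_le_mul_of_nonneg_left (hS₀min S (Finset.mem_univ S)) (hw0 S)
    linarith
  -- the dominating set
  refine ⟨↑(S₀ ∪ B S₀), ?_, ?_⟩
  · intro v hv
    rw [Finset.coe_union, Set.mem_union] at hv
    push_neg at hv
    obtain ⟨hv1, hv2⟩ := hv
    rw [Finset.mem_coe] at hv1 hv2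
    have hnotbad : ¬ (v ∉ S₀ ∧ ((inN A v).toFinset ∩ S₀).card < k) := by
      intro hcon
      exact hv2 (by simp only [hB, Finset.mem_filter]; exact ⟨Finset.mem_univ _, hcon⟩)
    push_neg at hnotbad
    have hk' : k ≤ ((inN A v).toFinset ∩ S₀).card := hnotbad hv1
    calc k ≤ ((inN A v).toFinset ∩ S₀).card := hk'
      _ = ((↑((inN A v).toFinset ∩ S₀) : Set V)).ncard := (Set.ncard_coe_finset _).symm
      _ ≤ (inN A v ∩ ↑(S₀ ∪ B S₀)).ncard := by
          apply Set.ncard_le_ncard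
          · intro x hx
            rw [Finset.coe_inter, Set.mem_inter_iff] at hx
            exact ⟨Set.mem_toFinset.1 (Finset.mem_coe.1 hx.1),
              by rw [Finset.coe_union]; exact Or.inl hx.2⟩
          · exact Set.toFinite _
  · rw [Set.ncard_coe_finset]
    calc (((S₀ ∪ B S₀).card : ℕ) : ℝ) ≤ ((S₀.card + (B S₀).card : ℕ) : ℝ) := by
          exact_mod_cast Finset.card_union_le _ _
      _ = g S₀ := by rw [hg]; push_cast; ring
      _ ≤ _ := hS₀

end Aux

theorem stmt0 {V : Type*} [Fintype V] [Nonempty V] (A : V → V → Prop)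
    (hirr : ∀ v, ¬ A v v)
    (δ : ℕ) (hδ : IsLeast {d : ℕ | ∃ v : V, ((inN A v).ncard = d)} δ)
    (k : ℕ) (hk : 1 ≤ k) (hkδ : k ≤ δ) :
    (gammaK A k : ℝ) ≤ (Fintype.card V : ℝ) *
      (1 - ((δ - k + 1 : ℕ) : ℝ) /
        (((δ.choose (k - 1) : ℝ)) ^ ((1 : ℝ) / ((δ - k + 1 : ℕ) : ℝ)) *
          (1 + ((δ - k + 1 : ℕ) : ℝ)) ^ ((1 : ℝ) + (1 : ℝ) / ((δ - k + 1 : ℕ) : ℝ)))) := by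
  classical
  have hmin : ∀ v : V, δ ≤ (inN A v).ncard := fun v => hδ.2 ⟨v, rfl⟩
  set d : ℕ := δ - k + 1 with hd
  have hd1 : 1 ≤ d := by omega
  have hd0 : (0:ℝ) < (d:ℝ) := by exact_mod_cast hd1
  set C : ℝ := (δ.choose (k-1) : ℝ) with hC
  have hC1 : (1:ℝ) ≤ C := by
    have h : 0 < δ.choose (k-1) := Nat.choose_pos (by omega)
    rw [hC]; exact_mod_cast h
  set x : ℝ := C * ((d:ℝ) + 1) with hx
  have hx1 : (1:ℝ) ≤ x := by nlinarith
  have hx0 : (0:ℝ) < x := by linarith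
  set q : ℝ := x ^ (-(1 / (d:ℝ))) with hq
  have hq0 : 0 < q := Real.rpow_pos_of_pos hx0 _
  have hq1 : q ≤ 1 := Real.rpow_le_one_of_one_le_of_nonpos hx1
    (neg_nonpos.2 (by positivity))
  set p : ℝ := 1 - q with hp
  have hp0 : 0 ≤ p := by rw [hp]; linarith
  have hpq : p + q = 1 := by rw [hp]; ring
  have hqd : q ^ d = x⁻¹ := by
    rw [hq, ← Real.rpow_natCast (x ^ (-(1 / (d:ℝ)))) d, ← Real.rpow_mul hx0.le]
    have : -(1 / (d:ℝ)) * (d:ℕ) = -1 := by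
      field_simp
    rw [this, Real.rpow_neg_one]
  obtain ⟨X, hXdom, hXle⟩ := gk_exists_small A hirr k δ hk hkδ hmin p q hp0 hq0.le hpq
  have hgam : (gammaK A k : ℝ) ≤ (X.ncard : ℝ) := by
    have : gammaK A k ≤ X.ncard := Nat.sInf_le ⟨X, hXdom, rfl⟩
    exact_mod_cast this
  have hexp : δ - k + 2 = d + 1 := by omega
  set n : ℝ := (Fintype.card V : ℝ) with hn
  have hn0 : 0 ≤ n := by positivity
  have key : n * p + n * (C * q ^ (δ - k + 2)) = n * (1 - q * (d:ℝ) / ((d:ℝ) + 1)) := by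
    rw [hexp, pow_succ, hqd]
    have hxne : x ≠ 0 := ne_of_gt hx0
    have hCx : C * (x⁻¹ * q) = q / ((d:ℝ)+1) := by
      rw [hx]
      field_simp
    rw [hCx, hp]
    field_simp
    ring
  have hform : q * (d:ℝ) / ((d:ℝ) + 1)
      = ((d:ℕ) : ℝ) / (C ^ ((1:ℝ) / (d:ℝ)) * (1 + (d:ℝ)) ^ ((1:ℝ) + (1:ℝ) / (d:ℝ))) := by
    have hd1R : (0:ℝ) < 1 + (d:ℝ) := by linarith
    have hsplit : (1 + (d:ℝ)) ^ ((1:ℝ) + (1:ℝ) / (d:ℝ))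
        = (1 + (d:ℝ)) * (1 + (d:ℝ)) ^ ((1:ℝ) / (d:ℝ)) := by
      rw [Real.rpow_add hd1R, Real.rpow_one]
    have hmul : C ^ ((1:ℝ) / (d:ℝ)) * (1 + (d:ℝ)) ^ ((1:ℝ) / (d:ℝ)) = x ^ ((1:ℝ) / (d:ℝ)) := by
      rw [← Real.mul_rpow (by linarith : (0:ℝ) ≤ C) hd1R.le]
      congr 1
      rw [hx]; ring
    have hqinv : q = (x ^ ((1:ℝ) / (d:ℝ)))⁻¹ := by
      rw [hq, Real.rpow_neg hx0.le]
    have hxd0 : 0 < x ^ ((1:ℝ) / (d:ℝ)) := Real.rpow_pos_of_pos hx0 _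
    rw [hsplit, show C ^ ((1:ℝ) / (d:ℝ)) * ((1 + (d:ℝ)) * (1 + (d:ℝ)) ^ ((1:ℝ) / (d:ℝ)))
        = x ^ ((1:ℝ) / (d:ℝ)) * (1 + (d:ℝ)) from by rw [← hmul]; ring, hqinv]
    rw [div_eq_div_iff (by positivity) (by positivity)]
    field_simp
    ring
  calc (gammaK A k : ℝ) ≤ (X.ncard : ℝ) := hgam
    _ ≤ n * p + n * (C * q ^ (δ - k + 2)) := hXle
    _ = n * (1 - q * (d:ℝ) / ((d:ℝ) + 1)) := key
    _ = n * (1 - ((d:ℕ) : ℝ) / (C ^ ((1:ℝ) / (d:ℝ)) * (1 + (d:ℝ)) ^ ((1:ℝ) + (1:ℝ) / (d:ℝ)))) := by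
        rw [hform]
end

section
/- For any real p ∈ [0,1] and integers 1 ≤ k ≤ δ, the sum over m from 0 to k-1 of C(δ, m) · p^m · (1-p)^(δ - m + 1) is at most C(δ, k-1) · (1-p)^(δ - k + 2). -/
theorem stmt9 (p : ℝ) (hp0 : 0 ≤ p) (hp1 : p ≤ 1) (δ k : ℕ) (hk : 1 ≤ k) (hkδ : k ≤ δ) :
    ∑ m ∈ Finset.range k, (δ.choose m : ℝ) * p ^ m * (1 - p) ^ (δ - m + 1)
      ≤ (δ.choose (k - 1) : ℝ) * (1 - p) ^ (δ - k + 2) := by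
  have hq0 : (0:ℝ) ≤ 1 - p := by linarith
  obtain ⟨j, rfl⟩ : ∃ j, k = j + 1 := ⟨k - 1, (Nat.succ_pred_eq_of_pos hk).symm⟩
  simp only [Nat.add_sub_cancel]
  have key : ∀ m ∈ Finset.range (j+1),
      (δ.choose m : ℝ) * p ^ m * (1 - p) ^ (δ - m + 1)
        ≤ (δ.choose j : ℝ) * ((j.choose m : ℝ) * p ^ m * (1 - p) ^ (j - m)) * (1 - p) ^ (δ - (j+1) + 2) := by
    intro m hm
    have hmj : m ≤ j := Nat.lt_succ_iff.mp (Finset.mem_range.mp hm)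
    have hexp : δ - m + 1 = (δ - (j+1) + 2) + (j - m) := by omega
    rw [hexp, pow_add]
    have hchoose : (δ.choose m : ℝ) ≤ (δ.choose j : ℝ) * (j.choose m : ℝ) := by
      have h := Nat.choose_mul (n := δ) (s := m) hmj
      have hge : 1 ≤ (δ - m).choose (j - m) := Nat.choose_pos (by omega)
      have : δ.choose m ≤ δ.choose j * j.choose m := by
        calc δ.choose m = δ.choose m * 1 := (Nat.mul_one _).symm
        _ ≤ δ.choose m * (δ - m).choose (j - m) := Nat.mul_le_mul_left _ hge
        _ = δ.choose j * j.choose m := h.symm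
      exact_mod_cast this
    have hnn : 0 ≤ p ^ m * ((1 - p) ^ (δ - (j+1) + 2) * (1 - p) ^ (j - m)) := by positivity
    nlinarith [mul_le_mul_of_nonneg_right hchoose hnn]
  calc ∑ m ∈ Finset.range (j+1), (δ.choose m : ℝ) * p ^ m * (1 - p) ^ (δ - m + 1)
      ≤ ∑ m ∈ Finset.range (j+1), (δ.choose j : ℝ) * ((j.choose m : ℝ) * p ^ m * (1 - p) ^ (j - m)) * (1 - p) ^ (δ - (j+1) + 2) :=
        Finset.sum_le_sum key
    _ = (δ.choose j : ℝ) * (1 - p) ^ (δ - (j+1) + 2) *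
          ∑ m ∈ Finset.range (j+1), p ^ m * (1 - p) ^ (j - m) * (j.choose m : ℝ) := by
        rw [Finset.mul_sum]; apply Finset.sum_congr rfl; intro m _; ring
    _ = (δ.choose j : ℝ) * (1 - p) ^ (δ - (j+1) + 2) := by
        rw [← add_pow]
        norm_num
end
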